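/- arXiv:2102.02990 — 7 statements merged into one kernel-verified Lean document; each statement's English description precedes it below -/
import Mathlib

section
/- If E →l E' is a transition with marking label l ∈ {bo} ∪ {[n] : n ≥ 1} in the entry/body-labeled 1-LTS L̂1(StExp^(*)(A)) generated by the marked TSS T̲̂^(*)(A), then for every applicative context C the transition C[E] →l C[E'] (with the same action and marking label) also holds in L̂1(StExp^(*)(A)). -/
universe u v w

/-- Star expressions over a set `A` of actions. -/
inductive StExp (A : Type u) : Type u
  | zero : StExp A
  | one : StExp A
  | act : A → StExp A
  | add : StExp A → StExp A → StExp A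
  | mul : StExp A → StExp A → StExp A
  | star : StExp A → StExp A

namespace StExp

variable {A : Type u}

/-- Immediate termination in Milner's TSS `T(A)`. -/
inductive Term : StExp A → Prop
  | one : Term StExp.one
  | addL {e₁ e₂ : StExp A} : Term e₁ → Term (StExp.add e₁ e₂)
  | addR {e₁ e₂ : StExp A} : Term e₂ → Term (StExp.add e₁ e₂)
  | mul {e₁ e₂ : StExp A} : Term e₁ → Term e₂ → Term (StExp.mul e₁ e₂)
  | star {e : StExp A} : Term (StExp.star e)

/-- Transitions in Milner's TSS `T(A)`. -/
inductive Step : StExp A → A → StExp A → Prop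
  | act {a : A} : Step (StExp.act a) a StExp.one
  | addL {e₁ e₂ e' : StExp A} {a : A} : Step e₁ a e' → Step (StExp.add e₁ e₂) a e'
  | addR {e₁ e₂ e' : StExp A} {a : A} : Step e₂ a e' → Step (StExp.add e₁ e₂) a e'
  | mulL {e₁ e₂ e₁' : StExp A} {a : A} :
      Step e₁ a e₁' → Step (StExp.mul e₁ e₂) a (StExp.mul e₁' e₂)
  | mulR {e₁ e₂ e₂' : StExp A} {a : A} :
      Term e₁ → Step e₂ a e₂' → Step (StExp.mul e₁ e₂) a e₂'
  | star {e e' : StExp A} {a : A} :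
      Step e a e' → Step (StExp.star e) a (StExp.mul e' (StExp.star e))

/-- (Syntactic) star height. -/
def height : StExp A → ℕ
  | .zero => 0
  | .one => 0
  | .act _ => 0
  | .add e₁ e₂ => max e₁.height e₂.height
  | .mul e₁ e₂ => max e₁.height e₂.height
  | .star e => e.height + 1

end StExp

/-- Stacked star expressions: `E ::= e | E·e | E * e*`. -/
inductive SExp (A : Type u) : Type u
  | up : StExp A → SExp A
  | pr : SExp A → StExp A → SExp A
  | st : SExp A → StExp A → SExp A

namespace SExp

variable {A : Type u}

/-- Projection to star expressions, interpreting `*` as `·`. -/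
def proj : SExp A → StExp A
  | .up e => e
  | .pr E e => StExp.mul E.proj e
  | .st E e => StExp.mul E.proj (StExp.star e)

/-- `E` is a star expression (contains no stacked product `*`). -/
def IsStExp : SExp A → Prop
  | .up _ => True
  | .pr E _ => IsStExp E
  | .st _ _ => False

/-- Star expressions that are not products (canonical arguments of `up`). -/
def UpOk : StExp A → Prop
  | .mul _ _ => False
  | _ => True

/-- Canonical stacked star expressions: products of star expressions are
represented by `pr` rather than by `up` applied to `StExp.mul`. -/
def Canonical : SExp A → Prop
  | .up e => UpOk e
  | .pr E _ => Canonical E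
  | .st E _ => Canonical E

/-- Canonical embedding of star expressions into stacked star expressions. -/
def flatUp : StExp A → SExp A
  | .mul e₁ e₂ => SExp.pr (flatUp e₁) e₂
  | e => SExp.up e

/-- Immediate termination for stacked star expressions (TSS `T̲^(*)(A)`). -/
inductive STerm : SExp A → Prop
  | up {e : StExp A} : StExp.Term e → STerm (SExp.up e)
  | pr {E : SExp A} {e : StExp A} : STerm E → StExp.Term e → STerm (SExp.pr E e)

/-- Transitions of the TSS `T̲^(*)(A)`; labels in `Option A`, where `none`
is the empty-step label `1`. -/
inductive SStep : SExp A → Option A → SExp A → Prop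
  | act {a : A} : SStep (SExp.up (StExp.act a)) (some a) (SExp.up StExp.one)
  | addL {e₁ e₂ : StExp A} {a : A} {E' : SExp A} :
      SStep (SExp.up e₁) (some a) E' → SStep (SExp.up (StExp.add e₁ e₂)) (some a) E'
  | addR {e₁ e₂ : StExp A} {a : A} {E' : SExp A} :
      SStep (SExp.up e₂) (some a) E' → SStep (SExp.up (StExp.add e₁ e₂)) (some a) E'
  | upMulL {e₁ e₂ : StExp A} {l : Option A} {E₁' : SExp A} :
      SStep (SExp.up e₁) l E₁' → SStep (SExp.up (StExp.mul e₁ e₂)) l (SExp.pr E₁' e₂)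
  | upMulR {e₁ e₂ : StExp A} {a : A} {E₂' : SExp A} :
      StExp.Term e₁ → SStep (SExp.up e₂) (some a) E₂' →
      SStep (SExp.up (StExp.mul e₁ e₂)) (some a) E₂'
  | upStar {e : StExp A} {a : A} {E' : SExp A} :
      SStep (SExp.up e) (some a) E' →
      SStep (SExp.up (StExp.star e)) (some a) (SExp.st E' e)
  | prL {E₁ E₁' : SExp A} {e₂ : StExp A} {l : Option A} :
      SStep E₁ l E₁' → SStep (SExp.pr E₁ e₂) l (SExp.pr E₁' e₂)
  | prR {E₁ E₂' : SExp A} {e₂ : StExp A} {a : A} :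
      STerm E₁ → SStep (SExp.up e₂) (some a) E₂' → SStep (SExp.pr E₁ e₂) (some a) E₂'
  | stL {E₁ E₁' : SExp A} {e₂ : StExp A} {l : Option A} :
      SStep E₁ l E₁' → SStep (SExp.st E₁ e₂) l (SExp.st E₁' e₂)
  | stOne {E₁ : SExp A} {e₂ : StExp A} :
      STerm E₁ → SStep (SExp.st E₁ e₂) none (SExp.up (StExp.star e₂))

/-- `1`-transition. -/
def OneStep (E F : SExp A) : Prop := SStep E none F

/-- Transition with an arbitrary label in `A ∪ {1}`. -/
def AStep (E F : SExp A) : Prop := ∃ l, SStep E l F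

/-- Induced (proper) transition `E ⇒a E'`: a sequence of `1`-transitions
followed by an `a`-transition. -/
def IStep (E : SExp A) (a : A) (E' : SExp A) : Prop :=
  ∃ F, Relation.ReflTransGen OneStep E F ∧ SStep F (some a) E'

/-- Induced termination `E ↓(1)`: a sequence of `1`-transitions ending in a
terminating expression. -/
def ITerm (E : SExp A) : Prop :=
  ∃ F, Relation.ReflTransGen OneStep E F ∧ STerm F

/-- `E` is normed: a path to an expression with immediate termination. -/
def Normed (E : SExp A) : Prop :=
  ∃ F, Relation.ReflTransGen AStep E F ∧ STerm F

/-- `E` is normed⁺: a nonempty sequence of induced transitions to an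
expression with induced termination. -/
def NormedP (E : SExp A) : Prop :=
  ∃ F, Relation.TransGen (fun X Y => ∃ a : A, IStep X a Y) E F ∧ ITerm F

/-- Induced termination as derived in the extension `T̲ind^(*)(A)`. -/
inductive IndTerm : SExp A → Prop
  | base {E : SExp A} : STerm E → IndTerm E
  | step {E F : SExp A} : SStep E none F → IndTerm F → IndTerm E

/-- Induced transitions as derived in the extension `T̲ind^(*)(A)`. -/
inductive IndStep : SExp A → A → SExp A → Prop
  | base {E E' : SExp A} {a : A} : SStep E (some a) E' → IndStep E a E'
  | step {E F E' : SExp A} {a : A} : SStep E none F → IndStep F a E' → IndStep E a E'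

/-- Marked transitions of the TSS `T̲̂^(*)(A)`: marking label `0` means a body
(`bo`) transition, `n ≥ 1` a loop-entry transition of level `n`. -/
inductive MStep : SExp A → Option A × ℕ → SExp A → Prop
  | act {a : A} : MStep (SExp.up (StExp.act a)) (some a, 0) (SExp.up StExp.one)
  | addL {e₁ e₂ : StExp A} {a : A} {n : ℕ} {E' : SExp A} :
      MStep (SExp.up e₁) (some a, n) E' → MStep (SExp.up (StExp.add e₁ e₂)) (some a, 0) E'
  | addR {e₁ e₂ : StExp A} {a : A} {n : ℕ} {E' : SExp A} :
      MStep (SExp.up e₂) (some a, n) E' → MStep (SExp.up (StExp.add e₁ e₂)) (some a, 0) E'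
  | upMulL {e₁ e₂ : StExp A} {l : Option A × ℕ} {E₁' : SExp A} :
      MStep (SExp.up e₁) l E₁' → MStep (SExp.up (StExp.mul e₁ e₂)) l (SExp.pr E₁' e₂)
  | upMulR {e₁ e₂ : StExp A} {a : A} {n : ℕ} {E₂' : SExp A} :
      StExp.Term e₁ → MStep (SExp.up e₂) (some a, n) E₂' →
      MStep (SExp.up (StExp.mul e₁ e₂)) (some a, 0) E₂'
  | upStarP {e : StExp A} {a : A} {n : ℕ} {E' : SExp A} :
      NormedP (SExp.up e) → MStep (SExp.up e) (some a, n) E' →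
      MStep (SExp.up (StExp.star e)) (some a, e.height + 1) (SExp.st E' e)
  | upStarN {e : StExp A} {a : A} {n : ℕ} {E' : SExp A} :
      ¬ NormedP (SExp.up e) → MStep (SExp.up e) (some a, n) E' →
      MStep (SExp.up (StExp.star e)) (some a, 0) (SExp.st E' e)
  | prL {E₁ E₁' : SExp A} {e₂ : StExp A} {l : Option A × ℕ} :
      MStep E₁ l E₁' → MStep (SExp.pr E₁ e₂) l (SExp.pr E₁' e₂)
  | prR {E₁ E₂' : SExp A} {e₂ : StExp A} {a : A} {n : ℕ} :
      STerm E₁ → MStep (SExp.up e₂) (some a, n) E₂' →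
      MStep (SExp.pr E₁ e₂) (some a, 0) E₂'
  | stL {E₁ E₁' : SExp A} {e₂ : StExp A} {l : Option A × ℕ} :
      MStep E₁ l E₁' → MStep (SExp.st E₁ e₂) l (SExp.st E₁' e₂)
  | stOne {E₁ : SExp A} {e₂ : StExp A} :
      STerm E₁ → MStep (SExp.st E₁ e₂) (none, 0) (SExp.up (StExp.star e₂))

/-- Body transition `→bo`. -/
def BStep (E F : SExp A) : Prop := ∃ l : Option A, MStep E (l, 0) F

/-- Star height of stacked star expressions. -/
def heightS : SExp A → ℕ
  | .up e => e.height
  | .pr E e => max E.heightS e.height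
  | .st E e => max E.heightS (e.height + 1)

end SExp

/-- Applicative contexts of stacked star expressions. -/
inductive AppCtx (A : Type u) : Type u
  | hole : AppCtx A
  | pr : AppCtx A → StExp A → AppCtx A
  | st : AppCtx A → StExp A → AppCtx A

/-- Filling the hole of an applicative context. -/
def AppCtx.fill {A : Type u} : AppCtx A → SExp A → SExp A
  | .hole, E => E
  | .pr C e, E => SExp.pr (C.fill E) e
  | .st C e, E => SExp.st (C.fill E) e

/-- A labeled transition system with termination. -/
structure LTS (S : Type u) (L : Type v) where
  step : S → L → S → Prop
  term : S → Prop

/-- Bisimulation between two LTSs with termination. -/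
def IsBisimulation {S₁ : Type u} {S₂ : Type v} {L : Type w}
    (M₁ : LTS S₁ L) (M₂ : LTS S₂ L) (B : S₁ → S₂ → Prop) : Prop :=
  (∃ s₁ s₂, B s₁ s₂) ∧
  ∀ s₁ s₂, B s₁ s₂ →
    ((∀ a s₁', M₁.step s₁ a s₁' → ∃ s₂', M₂.step s₂ a s₂' ∧ B s₁' s₂') ∧
     (∀ a s₂', M₂.step s₂ a s₂' → ∃ s₁', M₁.step s₁ a s₁' ∧ B s₁' s₂') ∧
     (M₁.term s₁ ↔ M₂.term s₂))

/-- The star expressions LTS `L(StExp(A))`. -/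
def stexpLTS (A : Type u) : LTS (StExp A) A := ⟨StExp.Step, StExp.Term⟩

/-- The induced LTS of the stacked star expressions 1-LTS `L1(StExp^(*)(A))`. -/
def indSExpLTS (A : Type u) : LTS (SExp A) A := ⟨SExp.IStep, SExp.ITerm⟩

/-- A (rooted) chart. -/
structure Chart (V : Type u) (L : Type v) where
  verts : Set V
  start : V
  step : V → L → V → Prop
  term : V → Prop

/-- Bisimulation between two charts: a bisimulation between the underlying
LTSs that relates the start vertices. -/
def IsChartBisim {V₁ : Type u} {V₂ : Type v} {L : Type w}
    (C₁ : Chart V₁ L) (C₂ : Chart V₂ L) (B : V₁ → V₂ → Prop) : Prop :=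
  (∀ x y, B x y → x ∈ C₁.verts ∧ y ∈ C₂.verts) ∧
  B C₁.start C₂.start ∧
  ∀ x y, B x y →
    ((∀ a x', C₁.step x a x' → ∃ y', C₂.step y a y' ∧ B x' y') ∧
     (∀ a y', C₂.step y a y' → ∃ x', C₁.step x a x' ∧ B x' y') ∧
     (C₁.term x ↔ C₂.term y))

def ChartBisimilar {V₁ : Type u} {V₂ : Type v} {L : Type w}
    (C₁ : Chart V₁ L) (C₂ : Chart V₂ L) : Prop :=
  ∃ B, IsChartBisim C₁ C₂ B

/-- Star expressions reachable from `e` in Milner's LTS. -/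
def MReach {A : Type u} (e : StExp A) : Set (StExp A) :=
  {f | Relation.ReflTransGen (fun x y => ∃ a, StExp.Step x a y) e f}

/-- The chart interpretation `C(e)` of a star expression. -/
def chartInt {A : Type u} (e : StExp A) : Chart (StExp A) A where
  verts := MReach e
  start := e
  step x a y := x ∈ MReach e ∧ StExp.Step x a y
  term x := x ∈ MReach e ∧ StExp.Term x

/-- Stacked star expressions reachable from (the canonical representation of)
`e` in the 1-LTS. -/
def SReach {A : Type u} (e : StExp A) : Set (SExp A) :=
  {F | Relation.ReflTransGen SExp.AStep (SExp.flatUp e) F}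

/-- The 1-chart interpretation `C1(e)` of a star expression. -/
def oneChartInt {A : Type u} (e : StExp A) : Chart (SExp A) (Option A) where
  verts := SReach e
  start := SExp.flatUp e
  step x l y := x ∈ SReach e ∧ SExp.SStep x l y
  term x := x ∈ SReach e ∧ SExp.STerm x

/-- The entry/body-labeled 1-chart interpretation `Ĉ1(e)`. -/
def markedOneChartInt {A : Type u} (e : StExp A) : Chart (SExp A) (Option A × ℕ) where
  verts := SReach e
  start := SExp.flatUp e
  step x l y := x ∈ SReach e ∧ SExp.MStep x l y
  term x := x ∈ SReach e ∧ SExp.STerm x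

/-- The induced chart of a 1-chart: induced transitions and induced
termination. -/
def indChart {V : Type u} {A : Type v} (C : Chart V (Option A)) : Chart V A where
  verts := C.verts
  start := C.start
  step x a y := ∃ u, Relation.ReflTransGen (fun s t => C.step s none t) x u ∧ C.step u (some a) y
  term x := ∃ u, Relation.ReflTransGen (fun s t => C.step s none t) x u ∧ C.term u

/-- An infinite path from the start vertex of a chart. -/
def IsInfPathFrom {V : Type u} {L : Type v} (C : Chart V L) (p : ℕ → V) : Prop :=
  p 0 = C.start ∧ ∀ i, ∃ l, C.step (p i) l (p (i + 1))

/-- Loop chart: (L1) an infinite path from the start vertex exists, (L2) every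
infinite path from the start vertex returns to it after a positive number of
transitions, (L3) only the start vertex may terminate. -/
def IsLoopChart {V : Type u} {L : Type v} (C : Chart V L) : Prop :=
  (∃ p, IsInfPathFrom C p) ∧
  (∀ p, IsInfPathFrom C p → ∃ k, 0 < k ∧ p k = C.start) ∧
  (∀ w ∈ C.verts, C.term w → w = C.start)

namespace LLEE

variable {S : Type u} {L : Type v}

/-- Body transition of an entry/body-labeling. -/
def Body (step : S → L × ℕ → S → Prop) (x y : S) : Prop := ∃ l, step x (l, 0) y

/-- Entry transition of level `n` of an entry/body-labeling. -/
def Entry (step : S → L × ℕ → S → Prop) (n : ℕ) (x y : S) : Prop := ∃ l, step x (l, n) y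

/-- Vertices of the induced subchart at `(v, n)`: on paths that start with an
`→[n]` transition from `v`, continue with body transitions, and halt upon
revisiting `v`. -/
def loopVerts (step : S → L × ℕ → S → Prop) (v : S) (n : ℕ) : Set S :=
  insert v {w | ∃ u, Entry step n v u ∧
    Relation.ReflTransGen (fun x y => Body step x y ∧ x ≠ v) u w}

/-- The induced subchart at `(v, n)`. -/
def subchartAt (step : S → L × ℕ → S → Prop) (term : S → Prop) (v : S) (n : ℕ) :
    Chart S (L × ℕ) where
  verts := loopVerts step v n
  start := v
  step x l y :=
    (x = v ∧ l.2 = n ∧ step x l y) ∨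
    (x ∈ loopVerts step v n ∧ x ≠ v ∧ l.2 = 0 ∧ step x l y)
  term x := x ∈ loopVerts step v n ∧ term x

/-- LLEE-witness conditions (W1)–(W3) for an entry/body-labeled transition
system with transitions `step` and termination `term`. -/
def IsWitness (step : S → L × ℕ → S → Prop) (term : S → Prop) : Prop :=
  (¬ ∃ p : ℕ → S, ∀ i, Body step (p i) (p (i + 1))) ∧
  (∀ v n, 0 < n → (∃ w, Entry step n v w) → IsLoopChart (subchartAt step term v n)) ∧
  (∀ v n, 0 < n → (∃ w, Entry step n v w) →
    ∀ t, t ∈ loopVerts step v n → t ≠ v → ∀ m t', 0 < m → Entry step m t t' → m < n)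

end LLEE

namespace LEE

variable {V : Type u} {L : Type v}

/-- Vertices of the subchart generated from `v` by a set `U` of transitions
from `v`: paths start with a transition in `U` and continue (with arbitrary
transitions) until `v` is reached again. -/
def genVerts (C : Chart V L) (v : V) (U : Set (V × L × V)) : Set V :=
  insert v {w | ∃ u, (∃ l, (v, l, u) ∈ U) ∧
    Relation.ReflTransGen (fun x y => (∃ l, C.step x l y) ∧ x ≠ v) u w}

/-- The subchart generated from `v` by the transitions in `U`. -/
def genSubchart (C : Chart V L) (v : V) (U : Set (V × L × V)) : Chart V L where
  verts := genVerts C v U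
  start := v
  step x l y :=
    (x = v ∧ (v, l, y) ∈ U) ∨
    (x ∈ genVerts C v U ∧ x ≠ v ∧ C.step x l y)
  term x := x ∈ genVerts C v U ∧ C.term x

/-- `U` determines a loop subchart of `C` rooted at `v`. -/
def IsLoopSubchart (C : Chart V L) (v : V) (U : Set (V × L × V)) : Prop :=
  v ∈ C.verts ∧ U.Nonempty ∧
  (∀ t ∈ U, t.1 = v ∧ C.step t.1 t.2.1 t.2.2) ∧
  IsLoopChart (genSubchart C v U)

/-- Elimination of the loop-entry transitions in `U`, followed by removal of
all vertices and transitions that become unreachable. -/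
def elim (C : Chart V L) (U : Set (V × L × V)) : Chart V L :=
  let step' : V → L → V → Prop := fun x l y => C.step x l y ∧ (x, l, y) ∉ U
  let R : Set V := {w | Relation.ReflTransGen (fun x y => ∃ l, step' x l y) C.start w}
  { verts := C.verts ∩ R
    start := C.start
    step := fun x l y => step' x l y ∧ x ∈ R ∧ y ∈ R
    term := fun x => C.term x ∧ x ∈ R }

/-- One step of the loop elimination procedure. -/
def ElimStep (C C' : Chart V L) : Prop :=
  ∃ v U, IsLoopSubchart C v U ∧ C' = elim C U

/-- The chart has an infinite path. -/
def HasInfPath (C : Chart V L) : Prop :=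
  ∃ p : ℕ → V, p 0 ∈ C.verts ∧ ∀ i, ∃ l, C.step (p i) l (p (i + 1))

/-- The loop existence and elimination property LEE: repeated elimination of
loop subcharts results in a chart without an infinite path. -/
def SatisfiesLEE (C : Chart V L) : Prop :=
  ∃ C', Relation.ReflTransGen ElimStep C C' ∧ ¬ HasInfPath C'

end LEE

/-- A maximal path of body transitions from `X` in the entry/body-labeled
1-LTS: finite (of length `len`) or infinite (`len = ⊤`), and if finite then
not extensible by any further body transition. -/
structure BoPath (A : Type u) (X : SExp A) where
  len : ℕ∞
  f : ℕ → SExp A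
  head : f 0 = X
  steps : ∀ i : ℕ, (i : ℕ∞) < len → SExp.BStep (f i) (f (i + 1))
  maximal : ∀ n : ℕ, len = (n : ℕ∞) → ∀ Y, ¬ SExp.BStep (f n) Y

/-- Canonical stacked star expressions (the states of the stacked star
expressions 1-LTS `L1(StExp^(*)(A))`). -/
def CSExp (A : Type u) : Type u := {E : SExp A // SExp.Canonical E}

/-- Marked transitions are preserved under applicative contexts,
with the same action and marking label. -/
theorem marked_step_under_applicative_contexts {A : Type u}
    (E E' : SExp A) (a : Option A) (l : ℕ)
    (h : SExp.MStep E (a, l) E') (C : AppCtx A) :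
    SExp.MStep (C.fill E) (a, l) (C.fill E') := by
  induction C with
  | hole => exact h
  | pr C e ih => exact SExp.MStep.prL ih
  | st C e ih => exact SExp.MStep.stL ih
end

section
/- Every maximal path of body transitions (→bo) from C[E * e*] in L̂1(StExp^(*)(A)), where E is a stacked star expression, e a star expression and C an applicative context, has one of the two forms: (i) C[E0 * e*] →bo C[E1 * e*] →bo ... (finite or infinite) where E = E0 →bo E1 →bo ... is a →bo path of stacked star expressions; or (ii) C[E0 * e*] →bo ... →bo C[En * e*] →bo C[e*] →bo ... for some n ∈ ℕ and stacked star expressions E0,...,En with E = E0 →bo ... →bo En, En↓, and En * e* →bo e*. -/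
universe u v w

section Aux

variable {A : Type u}

lemma not_sterm_fill_st (C : AppCtx A) (E : SExp A) (e : StExp A) :
    ¬ SExp.STerm (C.fill (SExp.st E e)) := by
  induction C with
  | hole => intro h; cases h
  | pr C f ih => intro h; cases h with | pr h1 h2 => exact ih h1
  | st C f ih => intro h; cases h

lemma fill_inj (C : AppCtx A) {X Y : SExp A} (h : C.fill X = C.fill Y) : X = Y := by
  induction C generalizing X Y with
  | hole => exact h
  | pr C f ih => injection h with h1 h2; exact ih h1
  | st C f ih => injection h with h1 h2; exact ih h1

lemma fill_st_ne_fill_up (C : AppCtx A) (X : SExp A) (e f : StExp A) :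
    C.fill (SExp.st X e) ≠ C.fill (SExp.up f) := by
  intro h
  exact (by cases fill_inj C h : False)

lemma bstep_fill_cases (C : AppCtx A) {E : SExp A} {e : StExp A} {Y : SExp A}
    (h : SExp.BStep (C.fill (SExp.st E e)) Y) :
    (∃ E', SExp.BStep E E' ∧ Y = C.fill (SExp.st E' e)) ∨
    (SExp.STerm E ∧ Y = C.fill (SExp.up (StExp.star e))) := by
  induction C generalizing Y with
  | hole =>
    obtain ⟨l, h⟩ := h
    cases h with
    | stL h' => exact Or.inl ⟨_, ⟨_, h'⟩, rfl⟩
    | stOne ht => exact Or.inr ⟨ht, rfl⟩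
  | pr C f ih =>
    obtain ⟨l, h⟩ := h
    cases h with
    | prL h' =>
      rcases ih ⟨_, h'⟩ with ⟨E', hb, rfl⟩ | ⟨ht, rfl⟩
      · exact Or.inl ⟨E', hb, rfl⟩
      · exact Or.inr ⟨ht, rfl⟩
    | prR ht _ => exact absurd ht (not_sterm_fill_st C E e)
  | st C f ih =>
    obtain ⟨l, h⟩ := h
    cases h with
    | stL h' =>
      rcases ih ⟨_, h'⟩ with ⟨E', hb, rfl⟩ | ⟨ht, rfl⟩
      · exact Or.inl ⟨E', hb, rfl⟩
      · exact Or.inr ⟨ht, rfl⟩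
    | stOne ht => exact absurd ht (not_sterm_fill_st C E e)

end Aux

/-- Every maximal path of body transitions from `C[E * e*]` has
one of the two forms (i), (ii). -/
theorem maximal_body_paths_from_stacked_product {A : Type u}
    (C : AppCtx A) (E : SExp A) (e : StExp A)
    (p : BoPath A (C.fill (SExp.st E e))) :
    (∃ g : ℕ → SExp A, g 0 = E ∧
      (∀ i : ℕ, (i : ℕ∞) < p.len → SExp.BStep (g i) (g (i + 1))) ∧
      (∀ i : ℕ, (i : ℕ∞) ≤ p.len → p.f i = C.fill (SExp.st (g i) e))) ∨
    (∃ n : ℕ, ∃ g : ℕ → SExp A, g 0 = E ∧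
      (∀ i : ℕ, i < n → SExp.BStep (g i) (g (i + 1))) ∧
      (∀ i : ℕ, i ≤ n → p.f i = C.fill (SExp.st (g i) e)) ∧
      SExp.STerm (g n) ∧
      SExp.BStep (SExp.st (g n) e) (SExp.up (StExp.star e)) ∧
      (n : ℕ∞) < p.len ∧
      p.f (n + 1) = C.fill (SExp.up (StExp.star e))) := by
  classical
  set P : ℕ → Prop := fun i => ∃ X, p.f i = C.fill (SExp.st X e) with hP
  let g : ℕ → SExp A := fun i => if h : P i then h.choose else E
  have hg : ∀ i (X : SExp A), p.f i = C.fill (SExp.st X e) → g i = X := by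
    intro i X hX
    have hPi : P i := ⟨X, hX⟩
    have : p.f i = C.fill (SExp.st (hPi.choose) e) := hPi.choose_spec
    have := fill_inj C (this.symm.trans hX)
    simp only [g, dif_pos hPi]
    injection this
  have hgspec : ∀ i, P i → p.f i = C.fill (SExp.st (g i) e) := by
    intro i hPi
    obtain ⟨X, hX⟩ := hPi
    rw [hg i X hX]; exact hX
  have hP0 : p.f 0 = C.fill (SExp.st E e) := p.head
  have hg0 : g 0 = E := hg 0 E hP0
  by_cases hA : ∀ n : ℕ, (n : ℕ∞) ≤ p.len → P n
  · left
    refine ⟨g, hg0, ?_, fun i hi => hgspec i (hA i hi)⟩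
    intro i hi
    have hle : ((i : ℕ∞)) ≤ p.len := le_of_lt hi
    have hstep := p.steps i hi
    rw [hgspec i (hA i hle)] at hstep
    rcases bstep_fill_cases C hstep with ⟨E', hb, hY⟩ | ⟨_, hY⟩
    · rw [hg (i + 1) E' hY]; exact hb
    · exfalso
      have hle1 : ((i + 1 : ℕ) : ℕ∞) ≤ p.len := by
        rw [Nat.cast_add_one]
        exact Order.add_one_le_of_lt hi
      obtain ⟨X, hX⟩ := hA (i + 1) hle1
      exact fill_st_ne_fill_up C X e (StExp.star e) (hX.symm.trans hY)
  · right
    push_neg at hA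
    have hex : ∃ m : ℕ, (m : ℕ∞) ≤ p.len ∧ ¬ P m := hA
    set m := Nat.find hex with hmdef
    have hm := Nat.find_spec hex
    rw [← hmdef] at hm
    have hmin : ∀ i < m, (i : ℕ∞) ≤ p.len → P i := by
      intro i hi hile
      by_contra hnP
      exact Nat.find_min hex hi ⟨hile, hnP⟩
    have hm0 : m ≠ 0 := by
      intro h0
      exact hm.2 (by rw [h0]; exact ⟨E, hP0⟩)
    obtain ⟨n, hn⟩ : ∃ n, m = n + 1 := ⟨m - 1, (Nat.succ_pred_eq_of_pos (Nat.pos_of_ne_zero hm0)).symm⟩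
    have hnlt : (n : ℕ∞) < p.len := by
      have h2 : ((n + 1 : ℕ) : ℕ∞) ≤ p.len := by rw [← hn]; exact hm.1
      exact lt_of_lt_of_le (by exact_mod_cast Nat.lt_succ_self n) h2
    have hPle : ∀ i, i ≤ n → P i := by
      intro i hi
      exact hmin i (by omega) (le_trans (by exact_mod_cast Nat.cast_le.mpr hi) (le_of_lt hnlt))
    have hfi : ∀ i, i ≤ n → p.f i = C.fill (SExp.st (g i) e) :=
      fun i hi => hgspec i (hPle i hi)
    -- the step at n
    have hstepn := p.steps n hnlt
    rw [hfi n le_rfl] at hstepn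
    rcases bstep_fill_cases C hstepn with ⟨E', hb, hY⟩ | ⟨ht, hY⟩
    · exact absurd (show P m by rw [hn]; exact ⟨E', hY⟩) hm.2
    · refine ⟨n, g, hg0, ?_, hfi, ht, ⟨none, SExp.MStep.stOne ht⟩, hnlt, hY⟩
      intro i hi
      have hile : (i : ℕ∞) < p.len :=
        lt_of_le_of_lt (by exact_mod_cast Nat.cast_le.mpr (by omega : i ≤ n)) hnlt
      have hstep := p.steps i hile
      rw [hfi i (by omega)] at hstep
      rcases bstep_fill_cases C hstep with ⟨E', hb, hY'⟩ | ⟨_, hY'⟩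
      · rw [hg (i + 1) E' hY']; exact hb
      · exfalso
        obtain ⟨X, hX⟩ := hPle (i + 1) (by omega)
        exact fill_st_ne_fill_up C X e (StExp.star e) (hX.symm.trans hY')
end

section
/- Every maximal path of body transitions (→bo) from E·e in L̂1(StExp^(*)(A)), where E is a stacked star expression and e a star expression, has one of the two forms: (i) E0·e →bo E1·e →bo ... (finite or infinite) where E = E0 →bo E1 →bo ... is a →bo path of stacked star expressions; or (ii) E0·e →bo ... →bo En·e →bo F →bo ... for some n ∈ ℕ, stacked star expressions E0,...,En,F with E = E0 →bo ... →bo En, En↓, and e →l F for some marking label l. -/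
universe u v w

theorem bstep_pr_cases {A : Type u} {G Y : SExp A} {e : StExp A}
    (h : SExp.BStep (SExp.pr G e) Y) :
    (∃ G', Y = SExp.pr G' e ∧ SExp.BStep G G') ∨
    (SExp.STerm G ∧ ∃ (a : Option A) (l : ℕ), SExp.MStep (SExp.up e) (a, l) Y) := by
  obtain ⟨l, h⟩ := h
  cases h with
  | prL h => exact Or.inl ⟨_, rfl, _, h⟩
  | prR ht h => exact Or.inr ⟨ht, _, _, h⟩

open scoped Classical

/-- Auxiliary sequence peeling the left factors along a body path from a product. -/
noncomputable def prSeq {A : Type u} (E : SExp A) (e : StExp A) (f : ℕ → SExp A) : ℕ → SExp A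
  | 0 => E
  | n + 1 =>
    if h : ∃ G', f (n + 1) = SExp.pr G' e ∧ SExp.BStep (prSeq E e f n) G'
    then h.choose else E

/-- Every maximal path of body transitions from `E·e` has one of
the two forms (i), (ii). -/
theorem maximal_body_paths_from_product {A : Type u}
    (E : SExp A) (e : StExp A) (p : BoPath A (SExp.pr E e)) :
    (∃ g : ℕ → SExp A, g 0 = E ∧
      (∀ i : ℕ, (i : ℕ∞) < p.len → SExp.BStep (g i) (g (i + 1))) ∧
      (∀ i : ℕ, (i : ℕ∞) ≤ p.len → p.f i = SExp.pr (g i) e)) ∨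
    (∃ n : ℕ, ∃ g : ℕ → SExp A, ∃ F : SExp A, g 0 = E ∧
      (∀ i : ℕ, i < n → SExp.BStep (g i) (g (i + 1))) ∧
      (∀ i : ℕ, i ≤ n → p.f i = SExp.pr (g i) e) ∧
      SExp.STerm (g n) ∧
      (∃ (a : Option A) (l : ℕ), SExp.MStep (SExp.up e) (a, l) F) ∧
      (n : ℕ∞) < p.len ∧
      p.f (n + 1) = F) := by
  classical
  set g : ℕ → SExp A := prSeq E e p.f with hg
  -- second disjunct abbreviation
  set CaseII : Prop :=
    (∃ n : ℕ, ∃ g : ℕ → SExp A, ∃ F : SExp A, g 0 = E ∧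
      (∀ i : ℕ, i < n → SExp.BStep (g i) (g (i + 1))) ∧
      (∀ i : ℕ, i ≤ n → p.f i = SExp.pr (g i) e) ∧
      SExp.STerm (g n) ∧
      (∃ (a : Option A) (l : ℕ), SExp.MStep (SExp.up e) (a, l) F) ∧
      (n : ℕ∞) < p.len ∧
      p.f (n + 1) = F) with hC
  have g0 : g 0 = E := rfl
  have main : ∀ n : ℕ, (n : ℕ∞) ≤ p.len →
      CaseII ∨ ((∀ i ≤ n, p.f i = SExp.pr (g i) e) ∧
        (∀ i < n, SExp.BStep (g i) (g (i + 1)))) := by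
    intro n
    induction n with
    | zero =>
      intro _
      refine Or.inr ⟨?_, by omega⟩
      intro i hi
      interval_cases i
      simpa [g0] using p.head
    | succ n ih =>
      intro hle
      have hnlt : (n : ℕ∞) < p.len := by
        refine lt_of_lt_of_le ?_ hle
        exact_mod_cast (by exact_mod_cast Nat.lt_succ_self n : (n : ℕ∞) < (n + 1 : ℕ))
      rcases ih (le_of_lt hnlt) with hc | ⟨hshape, hchain⟩
      · exact Or.inl hc
      · have hstep := p.steps n hnlt
        rw [hshape n le_rfl] at hstep
        rcases bstep_pr_cases hstep with ⟨G', hG'eq, hG'step⟩ | ⟨hterm, hexit⟩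
        · have hex : ∃ G', p.f (n + 1) = SExp.pr G' e ∧ SExp.BStep (prSeq E e p.f n) G' :=
            ⟨G', hG'eq, hG'step⟩
          have hgdef : g (n + 1) = hex.choose := by
            simp only [hg, prSeq, dif_pos hex]
          have hspec := hex.choose_spec
          refine Or.inr ⟨?_, ?_⟩
          · intro i hi
            by_cases h : i ≤ n
            · exact hshape i h
            · have h' : i = n + 1 := by omega
              rw [h', hgdef]; exact hspec.1
          · intro i hi
            rcases Nat.lt_succ_iff_lt_or_eq.mp hi with h | h
            · exact hchain i h
            · subst h; rw [hgdef]; exact hspec.2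
        · refine Or.inl ⟨n, g, p.f (n + 1), g0, hchain, hshape, hterm, hexit, hnlt, rfl⟩
  by_cases hC2 : CaseII
  · exact Or.inr hC2
  · left
    refine ⟨g, g0, ?_, ?_⟩
    · intro i hi
      have hle : ((i + 1 : ℕ) : ℕ∞) ≤ p.len := by
        have : ((i + 1 : ℕ) : ℕ∞) = (i : ℕ∞) + 1 := by push_cast; ring
        rw [this]
        exact Order.add_one_le_of_lt hi
      rcases main (i + 1) hle with hc | ⟨_, hchain⟩
      · exact absurd hc hC2
      · exact hchain i (Nat.lt_succ_self i)
    · intro i hi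
      rcases main i hi with hc | ⟨hshape, _⟩
      · exact absurd hc hC2
      · exact hshape i le_rfl
end

section
/- There is no infinite path of body transitions (→bo) in the entry/body-labeled 1-LTS L̂1(StExp^(*)(A)); that is, the relation →bo on stacked star expressions is terminating. -/
universe u v w

namespace SExpAux

open SExp

variable {A : Type u}

/-- Marked steps without the `upStarN` rule. -/
inductive MStepN : SExp A → Option A × ℕ → SExp A → Prop
  | act {a : A} : MStepN (SExp.up (StExp.act a)) (some a, 0) (SExp.up StExp.one)
  | addL {e₁ e₂ : StExp A} {a : A} {n : ℕ} {E' : SExp A} :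
      MStepN (SExp.up e₁) (some a, n) E' → MStepN (SExp.up (StExp.add e₁ e₂)) (some a, 0) E'
  | addR {e₁ e₂ : StExp A} {a : A} {n : ℕ} {E' : SExp A} :
      MStepN (SExp.up e₂) (some a, n) E' → MStepN (SExp.up (StExp.add e₁ e₂)) (some a, 0) E'
  | upMulL {e₁ e₂ : StExp A} {l : Option A × ℕ} {E₁' : SExp A} :
      MStepN (SExp.up e₁) l E₁' → MStepN (SExp.up (StExp.mul e₁ e₂)) l (SExp.pr E₁' e₂)
  | upMulR {e₁ e₂ : StExp A} {a : A} {n : ℕ} {E₂' : SExp A} :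
      StExp.Term e₁ → MStepN (SExp.up e₂) (some a, n) E₂' →
      MStepN (SExp.up (StExp.mul e₁ e₂)) (some a, 0) E₂'
  | upStarP {e : StExp A} {a : A} {n : ℕ} {E' : SExp A} :
      SExp.NormedP (SExp.up e) → MStepN (SExp.up e) (some a, n) E' →
      MStepN (SExp.up (StExp.star e)) (some a, e.height + 1) (SExp.st E' e)
  | prL {E₁ E₁' : SExp A} {e₂ : StExp A} {l : Option A × ℕ} :
      MStepN E₁ l E₁' → MStepN (SExp.pr E₁ e₂) l (SExp.pr E₁' e₂)
  | prR {E₁ E₂' : SExp A} {e₂ : StExp A} {a : A} {n : ℕ} :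
      SExp.STerm E₁ → MStepN (SExp.up e₂) (some a, n) E₂' →
      MStepN (SExp.pr E₁ e₂) (some a, 0) E₂'
  | stL {E₁ E₁' : SExp A} {e₂ : StExp A} {l : Option A × ℕ} :
      MStepN E₁ l E₁' → MStepN (SExp.st E₁ e₂) l (SExp.st E₁' e₂)
  | stOne {E₁ : SExp A} {e₂ : StExp A} :
      SExp.STerm E₁ → MStepN (SExp.st E₁ e₂) (none, 0) (SExp.up (StExp.star e₂))

theorem MStep.toSStep {E F : SExp A} {l : Option A × ℕ} (h : SExp.MStep E l F) :
    SExp.SStep E l.1 F := by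
  induction h with
  | act => exact SExp.SStep.act
  | addL _ ih => exact SExp.SStep.addL ih
  | addR _ ih => exact SExp.SStep.addR ih
  | upMulL _ ih => exact SExp.SStep.upMulL ih
  | upMulR h1 _ ih => exact SExp.SStep.upMulR h1 ih
  | upStarP _ _ ih => exact SExp.SStep.upStar ih
  | upStarN _ _ ih => exact SExp.SStep.upStar ih
  | prL _ ih => exact SExp.SStep.prL ih
  | prR h1 _ ih => exact SExp.SStep.prR h1 ih
  | stL _ ih => exact SExp.SStep.stL ih
  | stOne h1 => exact SExp.SStep.stOne h1

theorem SStep.height_le {E F : SExp A} {l : Option A} (h : SExp.SStep E l F) :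
    F.heightS ≤ E.heightS := by
  induction h with
  | act => simp [SExp.heightS, StExp.height]
  | addL _ ih => simp only [SExp.heightS, StExp.height] at *; omega
  | addR _ ih => simp only [SExp.heightS, StExp.height] at *; omega
  | upMulL _ ih => simp only [SExp.heightS, StExp.height] at *; omega
  | upMulR _ _ ih => simp only [SExp.heightS, StExp.height] at *; omega
  | upStar _ ih => simp only [SExp.heightS, StExp.height] at *; omega
  | prL _ ih => simp only [SExp.heightS, StExp.height] at *; omega
  | prR _ _ ih => simp only [SExp.heightS, StExp.height] at *; omega
  | stL _ ih => simp only [SExp.heightS, StExp.height] at *; omega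
  | stOne => simp only [SExp.heightS, StExp.height] at *; omega

/-- The measure `P` on star expressions. -/
def P : StExp A → ℕ
  | .zero => 1
  | .one => 1
  | .act _ => 2
  | .add e₁ e₂ => P e₁ + P e₂
  | .mul e₁ e₂ => P e₁ + P e₂
  | .star f => P f + 1

theorem P_pos (e : StExp A) : 1 ≤ P e := by
  induction e with
  | zero => simp [P]
  | one => simp [P]
  | act a => simp [P]
  | add e₁ e₂ ih₁ ih₂ => simp only [P]; omega
  | mul e₁ e₂ ih₁ ih₂ => simp only [P]; omega
  | star f ih => simp only [P]; omega

/-- The measure `mu` on stacked star expressions. -/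
def mu : SExp A → ℕ
  | .up (.star _) => 0
  | .up e => P e
  | .pr E g => mu E + P g
  | .st E _ => mu E + 1

theorem lemL {E : SExp A} {l : Option A × ℕ} {F : SExp A} (h : MStepN E l F) :
    ∀ e : StExp A, E = SExp.up e → mu F < P e := by
  induction h with
  | @act a =>
    intro e he; cases he; simp [mu, P]
  | @addL e₁ e₂ a n E' _ ih =>
    intro e he; cases he
    have h1 := ih e₁ rfl
    have h2 := P_pos e₂
    simp only [P]; omega
  | @addR e₁ e₂ a n E' _ ih =>
    intro e he; cases he
    have h1 := ih e₂ rfl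
    have h2 := P_pos e₁
    simp only [P]; omega
  | @upMulL e₁ e₂ l E₁' _ ih =>
    intro e he; cases he
    have h1 := ih e₁ rfl
    simp only [P, mu]; omega
  | @upMulR e₁ e₂ a n E₂' _ _ ih =>
    intro e he; cases he
    have h1 := ih e₂ rfl
    have h2 := P_pos e₁
    simp only [P]; omega
  | @upStarP e' a n E' _ _ ih =>
    intro e he; cases he
    have h1 := ih e' rfl
    simp only [P, mu]; omega
  | prL _ ih => intro e he; exact absurd he (by simp)
  | prR _ _ ih => intro e he; exact absurd he (by simp)
  | stL _ ih => intro e he; exact absurd he (by simp)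
  | stOne _ => intro e he; exact absurd he (by simp)

theorem lemG {E : SExp A} {l : Option A × ℕ} {F : SExp A} (h : MStepN E l F) :
    l.2 = 0 → mu F < mu E := by
  induction h with
  | @act a => intro _; simp [mu, P]
  | @addL e₁ e₂ a n E' hprem _ =>
    intro _
    have h1 := lemL hprem e₁ rfl
    have h2 := P_pos e₂
    show mu E' < mu (SExp.up (StExp.add e₁ e₂))
    simp only [mu, P]; omega
  | @addR e₁ e₂ a n E' hprem _ =>
    intro _
    have h1 := lemL hprem e₂ rfl
    have h2 := P_pos e₁
    show mu E' < mu (SExp.up (StExp.add e₁ e₂))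
    simp only [mu, P]; omega
  | @upMulL e₁ e₂ l E₁' hprem _ =>
    intro _
    have h1 := lemL hprem e₁ rfl
    show mu (SExp.pr E₁' e₂) < mu (SExp.up (StExp.mul e₁ e₂))
    simp only [mu, P]; omega
  | @upMulR e₁ e₂ a n E₂' _ hprem _ =>
    intro _
    have h1 := lemL hprem e₂ rfl
    have h2 := P_pos e₁
    show mu E₂' < mu (SExp.up (StExp.mul e₁ e₂))
    simp only [mu, P]; omega
  | @upStarP e a n E' _ _ _ =>
    intro hc; exact absurd hc (by simp)
  | @prL E₁ E₁' e₂ l _ ih =>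
    intro hl
    have h1 := ih hl
    simp only [mu]; omega
  | @prR E₁ E₂' e₂ a n _ hprem _ =>
    intro _
    have h1 := lemL hprem e₂ rfl
    simp only [mu]; omega
  | @stL E₁ E₁' e₂ l _ ih =>
    intro hl
    have h1 := ih hl
    simp only [mu]; omega
  | @stOne E₁ e₂ _ =>
    intro _
    simp only [mu]; omega

end SExpAux

namespace SExpAux

open SExp

variable {A : Type u}

theorem sterm_fill (C : AppCtx A) (X : SExp A) (f : StExp A) :
    ¬ SExp.STerm (C.fill (SExp.st X f)) := by
  induction C with
  | hole => intro h; cases h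
  | pr C' g ih => intro h; cases h with | pr h1 _ => exact ih h1
  | st C' g ih => intro h; cases h

theorem fill_inj (C : AppCtx A) {E E' : SExp A} (h : C.fill E = C.fill E') : E = E' := by
  induction C with
  | hole => exact h
  | pr C' g ih => exact ih (by injection h)
  | st C' g ih => exact ih (by injection h)

theorem heightS_fill_ge (C : AppCtx A) (E : SExp A) : E.heightS ≤ (C.fill E).heightS := by
  induction C with
  | hole => exact le_rfl
  | pr C' g ih => exact le_trans ih (le_max_left _ _)
  | st C' g ih => exact le_trans ih (le_max_left _ _)

theorem lemE (C : AppCtx A) {X : SExp A} {f : StExp A} {l : Option A × ℕ} {G : SExp A}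
    (h : SExp.MStep (C.fill (SExp.st X f)) l G) :
    (∃ X', SExp.MStep X l X' ∧ G = C.fill (SExp.st X' f)) ∨ SExp.STerm X := by
  induction C generalizing l G with
  | hole =>
    cases h with
    | stL h' => exact Or.inl ⟨_, h', rfl⟩
    | stOne ht => exact Or.inr ht
  | pr C' g ih =>
    cases h with
    | prL h' =>
      rcases ih h' with ⟨X', hX', rfl⟩ | ht
      · exact Or.inl ⟨X', hX', rfl⟩
      · exact Or.inr ht
    | prR hT _ => exact absurd hT (sterm_fill C' X f)
  | st C' g ih =>
    cases h with
    | stL h' =>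
      rcases ih h' with ⟨X', hX', rfl⟩ | ht
      · exact Or.inl ⟨X', hX', rfl⟩
      · exact Or.inr ht
    | stOne hT => exact absurd hT (sterm_fill C' X f)

/-- Prepend a `1`-step to a nonempty sequence of induced steps. -/
theorem transGen_prepend {X₁ Y : SExp A} 
    (h2 : Relation.TransGen (fun U V => ∃ a : A, SExp.IStep U a V) X₁ Y) :
    ∀ X, SExp.OneStep X X₁ → Relation.TransGen (fun U V => ∃ a : A, SExp.IStep U a V) X Y := by
  induction h2 with
  | single hr =>
    intro X h1
    obtain ⟨a, F'', rtg, s⟩ := hr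
    exact Relation.TransGen.single ⟨a, F'', Relation.ReflTransGen.head h1 rtg, s⟩
  | tail _ hr ih =>
    intro X h1
    exact Relation.TransGen.tail (ih X h1) hr

/-- Decompose a reaching-termination path into induced steps and induced termination. -/
theorem reach_term {X F : SExp A} (h : Relation.ReflTransGen SExp.AStep X F)
    (hF : SExp.STerm F) :
    SExp.ITerm X ∨ ∃ Y, Relation.TransGen (fun U V => ∃ a : A, SExp.IStep U a V) X Y ∧
      SExp.ITerm Y := by
  induction h using Relation.ReflTransGen.head_induction_on with
  | refl => exact Or.inl ⟨F, Relation.ReflTransGen.refl, hF⟩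
  | head h' _ ih =>
    obtain ⟨l, hs⟩ := h'
    cases l with
    | none =>
      rcases ih with ⟨G, rtg, ht⟩ | ⟨Y, tg, it⟩
      · exact Or.inl ⟨G, Relation.ReflTransGen.head hs rtg, ht⟩
      · exact Or.inr ⟨Y, transGen_prepend tg _ hs, it⟩
    | some a =>
      rcases ih with it | ⟨Y, tg, it⟩
      · exact Or.inr ⟨_, Relation.TransGen.single ⟨a, _, Relation.ReflTransGen.refl, hs⟩, it⟩
      · exact Or.inr ⟨Y, Relation.TransGen.head ⟨a, _, Relation.ReflTransGen.refl, hs⟩ tg, it⟩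

/-- If a proper step target reaches termination, the source is normed⁺. -/
theorem normedP_of {e : StExp A} {a : A} {E' F : SExp A}
    (h1 : SExp.SStep (SExp.up e) (some a) E')
    (h2 : Relation.ReflTransGen SExp.AStep E' F) (h3 : SExp.STerm F) :
    SExp.NormedP (SExp.up e) := by
  have histep : SExp.IStep (SExp.up e) a E' := ⟨SExp.up e, Relation.ReflTransGen.refl, h1⟩
  rcases reach_term h2 h3 with it | ⟨Y, tg, it⟩
  · exact ⟨E', Relation.TransGen.single ⟨a, histep⟩, it⟩
  · exact ⟨Y, Relation.TransGen.head ⟨a, histep⟩ tg, it⟩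

/-- Dichotomy: a marked step either avoids `upStarN` or produces a locked
star frame in the spine of the target. -/
theorem dichotomy {E : SExp A} {l : Option A × ℕ} {F : SExp A} (h : SExp.MStep E l F) :
    MStepN E l F ∨ ∃ (C : AppCtx A) (f : StExp A) (a : A) (F' : SExp A),
      F = C.fill (SExp.st F' f) ∧ ¬ SExp.NormedP (SExp.up f) ∧
      SExp.SStep (SExp.up f) (some a) F' := by
  induction h with
  | act => exact Or.inl MStepN.act
  | addL _ ih =>
    rcases ih with hN | hR
    · exact Or.inl (MStepN.addL hN)
    · exact Or.inr hR
  | addR _ ih =>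
    rcases ih with hN | hR
    · exact Or.inl (MStepN.addR hN)
    · exact Or.inr hR
  | @upMulL e₁ e₂ l E₁' _ ih =>
    rcases ih with hN | ⟨C, f, a, F', heq, hnn, hs⟩
    · exact Or.inl (MStepN.upMulL hN)
    · exact Or.inr ⟨AppCtx.pr C e₂, f, a, F', by rw [heq]; rfl, hnn, hs⟩
  | upMulR h1 _ ih =>
    rcases ih with hN | hR
    · exact Or.inl (MStepN.upMulR h1 hN)
    · exact Or.inr hR
  | @upStarP e a n E' h1 _ ih =>
    rcases ih with hN | ⟨C, f, a', F', heq, hnn, hs⟩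
    · exact Or.inl (MStepN.upStarP h1 hN)
    · exact Or.inr ⟨AppCtx.st C e, f, a', F', by rw [heq]; rfl, hnn, hs⟩
  | @upStarN e a n E' h1 hprem ih =>
    exact Or.inr ⟨AppCtx.hole, e, a, E', rfl, h1, MStep.toSStep hprem⟩
  | @prL E₁ E₁' e₂ l _ ih =>
    rcases ih with hN | ⟨C, f, a, F', heq, hnn, hs⟩
    · exact Or.inl (MStepN.prL hN)
    · exact Or.inr ⟨AppCtx.pr C e₂, f, a, F', by rw [heq]; rfl, hnn, hs⟩
  | prR h1 _ ih =>
    rcases ih with hN | hR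
    · exact Or.inl (MStepN.prR h1 hN)
    · exact Or.inr hR
  | @stL E₁ E₁' e₂ l _ ih =>
    rcases ih with hN | ⟨C, f, a, F', heq, hnn, hs⟩
    · exact Or.inl (MStepN.stL hN)
    · exact Or.inr ⟨AppCtx.st C e₂, f, a, F', by rw [heq]; rfl, hnn, hs⟩
  | stOne h1 => exact Or.inl (MStepN.stOne h1)

theorem astep_rtg_height {X Y : SExp A} (h : Relation.ReflTransGen SExp.AStep X Y) :
    Y.heightS ≤ X.heightS := by
  induction h with
  | refl => exact le_rfl
  | tail _ hr ih =>
    obtain ⟨l, hs⟩ := hr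
    exact le_trans (SStep.height_le hs) ih

end SExpAux

namespace SExpAux

variable {A : Type u}

theorem main_aux :
    ∀ n : ℕ, ∀ p : ℕ → SExp A, (∀ i, SExp.BStep (p i) (p (i + 1))) →
      (p 0).heightS ≤ n → False := by
  intro n
  induction n using Nat.strong_induction_on with
  | _ n IH =>
  intro p hp hh
  -- heights stay bounded along the path
  have hht : ∀ i, (p i).heightS ≤ n := by
    intro i
    induction i with
    | zero => exact hh
    | succ i ih =>
      obtain ⟨l, hm⟩ := hp i
      exact le_trans (SStep.height_le (MStep.toSStep hm)) ih
  by_cases hall : ∀ i, ∃ l : Option A, MStepN (p i) (l, 0) (p (i + 1))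
  · -- measure descent
    have hdec : ∀ i, mu (p (i + 1)) < mu (p i) := by
      intro i
      obtain ⟨l, h⟩ := hall i
      exact lemG h rfl
    have hsum : ∀ i, mu (p i) + i ≤ mu (p 0) := by
      intro i
      induction i with
      | zero => omega
      | succ i ih => have := hdec i; omega
    have := hsum (mu (p 0) + 1)
    omega
  · push_neg at hall
    obtain ⟨i, hi⟩ := hall
    obtain ⟨l, hm⟩ := hp i
    rcases dichotomy hm with hN | ⟨C, f, a, F', heq, hnn, hs⟩
    · exact hi l hN
    · -- locked star frame: extract an inner infinite body path
      set p' : ℕ → SExp A := fun j => p (i + 1 + j) with hp'def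
      have hp' : ∀ j, SExp.BStep (p' j) (p' (j + 1)) := fun j => hp (i + 1 + j)
      have hp'0 : p' 0 = C.fill (SExp.st F' f) := heq
      have hex : ∀ j, ∃ X, p' j = C.fill (SExp.st X f) ∧
          Relation.ReflTransGen SExp.AStep F' X := by
        intro j
        induction j with
        | zero => exact ⟨F', hp'0, Relation.ReflTransGen.refl⟩
        | succ j ihj =>
          obtain ⟨X, h1, h2⟩ := ihj
          obtain ⟨l', hm'⟩ := hp' j
          rw [h1] at hm'
          rcases lemE C hm' with ⟨X', hX', hGeq⟩ | hterm
          · exact ⟨X', hGeq, Relation.ReflTransGen.tail h2 ⟨l', MStep.toSStep hX'⟩⟩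
          · exact absurd (normedP_of hs h2 hterm) hnn
      choose q hq1 hq2 using hex
      have hqstep : ∀ j, SExp.BStep (q j) (q (j + 1)) := by
        intro j
        obtain ⟨l', hm'⟩ := hp' j
        rw [hq1 j] at hm'
        rcases lemE C hm' with ⟨X', hX', hGeq⟩ | hterm
        · have heq2 : C.fill (SExp.st X' f) = C.fill (SExp.st (q (j + 1)) f) := by
            rw [← hGeq, hq1 (j + 1)]
          have heq3 : X' = q (j + 1) := by
            have := fill_inj C heq2
            injection this
          exact ⟨l', heq3 ▸ hX'⟩
        · exact absurd (normedP_of hs (hq2 j) hterm) hnn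
      -- star height drops
      have hfh : f.height + 1 ≤ n := by
        have h1 : f.height + 1 ≤ (SExp.st F' f).heightS := le_max_right _ _
        have h2 := heightS_fill_ge C (SExp.st F' f)
        have h3 := hht (i + 1)
        rw [heq] at h3
        omega
      have hq0 : (q 0).heightS ≤ f.height := by
        have h1 := astep_rtg_height (hq2 0)
        have h2 : F'.heightS ≤ (SExp.up f).heightS := SStep.height_le hs
        simp only [SExp.heightS] at h2
        omega
      exact IH f.height (by omega) q hqstep hq0

end SExpAux



/-- There is no infinite path of body transitions in the
entry/body-labeled 1-LTS `L̂1(StExp^(*)(A))`. -/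
theorem no_infinite_body_path (A : Type u) :
    ¬ ∃ p : ℕ → SExp A, ∀ i, SExp.BStep (p i) (p (i + 1)) := by
  rintro ⟨p, hp⟩
  exact SExpAux.main_aux (SExp.heightS (p 0)) p hp le_rfl
end

section
/- If a stacked star expression E over A is normed, then there exists a star expression f with f↓ such that E →bo* f, i.e., E reaches f by a (possibly empty) sequence of body transitions in L̂1(StExp^(*)(A)). -/
universe u v w

namespace StExpAux

variable {A : Type u}

/-- Syntactic normedness of star expressions. -/
def N : StExp A → Prop
  | .zero => False
  | .one => True
  | .act _ => True
  | .add e f => N e ∨ N f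
  | .mul e f => N e ∧ N f
  | .star _ => True

/-- Syntactic normedness of stacked star expressions. -/
def SN : SExp A → Prop
  | .up e => N e
  | .pr E e => SN E ∧ N e
  | .st E _ => SN E

theorem term_N {e : StExp A} (h : StExp.Term e) : N e := by
  induction h <;> simp [N, *]

theorem sterm_SN {E : SExp A} (h : SExp.STerm E) : SN E := by
  induction h with
  | up h => exact term_N h
  | pr _ h2 ih => exact ⟨ih, term_N h2⟩

theorem sterm_isStExp {E : SExp A} (h : SExp.STerm E) : SExp.IsStExp E := by
  induction h with
  | up _ => trivial
  | pr _ _ ih => exact ih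

theorem sstep_SN {E E' : SExp A} {l : Option A} (h : SExp.SStep E l E') :
    SN E' → SN E := by
  induction h with
  | act => intro _; trivial
  | addL _ ih => intro h'; exact Or.inl (ih h')
  | addR _ ih => intro h'; exact Or.inr (ih h')
  | upMulL _ ih => intro h'; exact ⟨ih h'.1, h'.2⟩
  | upMulR ht _ ih => intro h'; exact ⟨term_N ht, ih h'⟩
  | upStar _ ih => intro h'; trivial
  | prL _ ih => intro h'; exact ⟨ih h'.1, h'.2⟩
  | prR ht _ ih => intro h'; exact ⟨sterm_SN ht, ih h'⟩
  | stL _ ih => intro h'; exact ih h'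
  | stOne ht => intro _; have := sterm_SN ht; exact this

theorem mstep_up_some_aux {E : SExp A} {p : Option A × ℕ} {E' : SExp A}
    (h : SExp.MStep E p E') (he : ∃ e, E = SExp.up e) : ∃ a n, p = (some a, n) := by
  induction h with
  | upMulL _ ih => exact ih ⟨_, rfl⟩
  | prL _ _ => obtain ⟨e, he⟩ := he; cases he
  | stL _ _ => obtain ⟨e, he⟩ := he; cases he
  | stOne => obtain ⟨e, he⟩ := he; cases he
  | _ => exact ⟨_, _, rfl⟩

theorem mstep_up_some {e : StExp A} {l : Option A} {n : ℕ} {E' : SExp A}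
    (h : SExp.MStep (SExp.up e) (l, n) E') : ∃ a, l = some a := by
  obtain ⟨a, m, hp⟩ := mstep_up_some_aux h ⟨e, rfl⟩
  rw [Prod.mk.injEq] at hp
  exact ⟨a, hp.1⟩

theorem bpath_pr {E F : SExp A} (e : StExp A)
    (h : Relation.ReflTransGen SExp.BStep E F) :
    Relation.ReflTransGen SExp.BStep (SExp.pr E e) (SExp.pr F e) :=
  Relation.ReflTransGen.lift (fun X => SExp.pr X e)
    (fun _ _ hb => hb.imp (fun _ hs => SExp.MStep.prL hs)) _ _ h

theorem bpath_st {E F : SExp A} (e : StExp A)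
    (h : Relation.ReflTransGen SExp.BStep E F) :
    Relation.ReflTransGen SExp.BStep (SExp.st E e) (SExp.st F e) :=
  Relation.ReflTransGen.lift (fun X => SExp.st X e)
    (fun _ _ hb => hb.imp (fun _ hs => SExp.MStep.stL hs)) _ _ h

theorem N_body {e : StExp A} (h : N e) :
    ∃ F, Relation.ReflTransGen SExp.BStep (SExp.up e) F ∧ SExp.STerm F := by
  induction e with
  | zero => exact absurd h (by simp [N])
  | one => exact ⟨_, .refl, .up .one⟩
  | act a => exact ⟨_, .single ⟨some a, .act⟩, .up .one⟩
  | add e₁ e₂ ih₁ ih₂ =>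
    rcases h with h | h
    · obtain ⟨F, hp, hF⟩ := ih₁ h
      rcases hp.cases_head with rfl | ⟨E', ⟨l, hs⟩, rest⟩
      · cases hF with
        | up ht => exact ⟨_, .refl, .up (.addL ht)⟩
      · obtain ⟨a, rfl⟩ := mstep_up_some hs
        exact ⟨F, .head ⟨some a, .addL hs⟩ rest, hF⟩
    · obtain ⟨F, hp, hF⟩ := ih₂ h
      rcases hp.cases_head with rfl | ⟨E', ⟨l, hs⟩, rest⟩
      · cases hF with
        | up ht => exact ⟨_, .refl, .up (.addR ht)⟩
      · obtain ⟨a, rfl⟩ := mstep_up_some hs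
        exact ⟨F, .head ⟨some a, .addR hs⟩ rest, hF⟩
  | mul e₁ e₂ ih₁ ih₂ =>
    obtain ⟨F₁, hp₁, hF₁⟩ := ih₁ h.1
    obtain ⟨F₂, hp₂, hF₂⟩ := ih₂ h.2
    rcases hp₁.cases_head with rfl | ⟨E₁', ⟨l₁, hs₁⟩, rest₁⟩
    · have ht₁ : StExp.Term e₁ := by cases hF₁ with | up ht => exact ht
      rcases hp₂.cases_head with rfl | ⟨E₂', ⟨l₂, hs₂⟩, rest₂⟩
      · have ht₂ : StExp.Term e₂ := by cases hF₂ with | up ht => exact ht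
        exact ⟨_, .refl, .up (.mul ht₁ ht₂)⟩
      · obtain ⟨a, rfl⟩ := mstep_up_some hs₂
        exact ⟨F₂, .head ⟨some a, .upMulR ht₁ hs₂⟩ rest₂, hF₂⟩
    · have P : Relation.ReflTransGen SExp.BStep (SExp.up (StExp.mul e₁ e₂))
          (SExp.pr F₁ e₂) :=
        Relation.ReflTransGen.head ⟨l₁, .upMulL hs₁⟩ (bpath_pr e₂ rest₁)
      rcases hp₂.cases_head with rfl | ⟨E₂', ⟨l₂, hs₂⟩, rest₂⟩
      · have ht₂ : StExp.Term e₂ := by cases hF₂ with | up ht => exact ht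
        exact ⟨_, P, .pr hF₁ ht₂⟩
      · obtain ⟨a, rfl⟩ := mstep_up_some hs₂
        exact ⟨F₂, P.trans (.head ⟨some a, .prR hF₁ hs₂⟩ rest₂), hF₂⟩
  | star e _ => exact ⟨_, .refl, .up .star⟩

theorem SN_body {E : SExp A} (h : SN E) :
    ∃ F, Relation.ReflTransGen SExp.BStep E F ∧ SExp.STerm F := by
  induction E with
  | up e => exact N_body h
  | pr E₁ e₂ ih =>
    obtain ⟨F₁, hp₁, hF₁⟩ := ih h.1
    obtain ⟨F₂, hp₂, hF₂⟩ := N_body h.2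
    have P := bpath_pr e₂ hp₁
    rcases hp₂.cases_head with rfl | ⟨E₂', ⟨l₂, hs₂⟩, rest₂⟩
    · have ht₂ : StExp.Term e₂ := by cases hF₂ with | up ht => exact ht
      exact ⟨_, P, .pr hF₁ ht₂⟩
    · obtain ⟨a, rfl⟩ := mstep_up_some hs₂
      exact ⟨F₂, P.trans (.head ⟨some a, .prR hF₁ hs₂⟩ rest₂), hF₂⟩
  | st E₁ e₂ ih =>
    obtain ⟨F₁, hp₁, hF₁⟩ := ih h
    exact ⟨SExp.up (StExp.star e₂),
      (bpath_st e₂ hp₁).trans (.single ⟨none, .stOne hF₁⟩), .up .star⟩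

end StExpAux

/-- Every normed stacked star expression reaches, by a (possibly
empty) sequence of body transitions, a star expression that terminates. -/
theorem normed_body_path_to_termination {A : Type u} (E : SExp A)
    (h : SExp.Normed E) :
    ∃ F : SExp A, Relation.ReflTransGen SExp.BStep E F ∧
      SExp.IsStExp F ∧ SExp.STerm F := by
  obtain ⟨G, hp, hG⟩ := h
  have hSN : StExpAux.SN E := by
    induction hp using Relation.ReflTransGen.head_induction_on with
    | refl => exact StExpAux.sterm_SN hG
    | head hstep _ ih =>
      obtain ⟨l, hs⟩ := hstep
      exact StExpAux.sstep_SN hs ih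
  obtain ⟨F, hbp, hF⟩ := StExpAux.SN_body hSN
  exact ⟨F, hbp, StExpAux.sterm_isStExp hF, hF⟩
end

section
/- If E →[n] E' is a loop-entry transition with level n > 0 in L̂1(StExp^(*)(A)), then there exist a star expression e, an applicative context C, a stacked star expression E0', an action a and a marking label l such that E = C[e*], e is normed⁺, e →(a,l) E0', E' = C[E0' * e*], and n = h(e) + 1. -/
universe u v w

theorem loop_entry_aux {A : Type u} :
    ∀ {E E' : SExp A} {p : Option A × ℕ}, SExp.MStep E p E' → 0 < p.2 →
    SExp.Canonical E →
    ∃ (e : StExp A) (C : AppCtx A) (E₀ : SExp A) (a : A) (l : ℕ),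
      E = C.fill (SExp.up (StExp.star e)) ∧
      SExp.NormedP (SExp.up e) ∧
      SExp.MStep (SExp.up e) (some a, l) E₀ ∧
      E' = C.fill (SExp.st E₀ e) ∧
      p.2 = e.height + 1 := by
  intro E E' p h
  induction h with
  | act => intro hn _; simp at hn
  | addL _ _ => intro hn _; simp at hn
  | addR _ _ => intro hn _; simp at hn
  | upMulL _ _ => intro _ hE; exact hE.elim
  | upMulR _ _ _ => intro hn _; simp at hn
  | upStarP hnp hstep =>
      intro _ _
      exact ⟨_, AppCtx.hole, _, _, _, rfl, hnp, hstep, rfl, rfl⟩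
  | upStarN _ _ _ => intro hn _; simp at hn
  | prL _ ih =>
      rename_i E₁ E₁' e₂ lab hs
      intro hn hE
      obtain ⟨e, C, E₀, a, l, h1, h2, h3, h4, h5⟩ := ih hn hE
      exact ⟨e, C.pr e₂, E₀, a, l, by simp [AppCtx.fill, h1], h2, h3,
        by simp [AppCtx.fill, h4], h5⟩
  | prR _ _ _ => intro hn _; simp at hn
  | stL _ ih =>
      rename_i E₁ E₁' e₂ lab hs
      intro hn hE
      obtain ⟨e, C, E₀, a, l, h1, h2, h3, h4, h5⟩ := ih hn hE
      exact ⟨e, C.st e₂, E₀, a, l, by simp [AppCtx.fill, h1], h2, h3,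
        by simp [AppCtx.fill, h4], h5⟩
  | stOne _ => intro hn _; simp at hn

/-- Every loop-entry transition `E →[n] E'` (level `n > 0`)
decomposes as `E = C[e*]`, `e` normed⁺, `e →(a,l) E₀'`, `E' = C[E₀' * e*]`,
and `n = h(e) + 1`. -/
theorem loop_entry_transition_decomposition {A : Type u}
    (E E' : SExp A) (ab : Option A) (n : ℕ) (hn : 0 < n)
    (hE : SExp.Canonical E)
    (h : SExp.MStep E (ab, n) E') :
    ∃ (e : StExp A) (C : AppCtx A) (E₀ : SExp A) (a : A) (l : ℕ),
      E = C.fill (SExp.up (StExp.star e)) ∧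
      SExp.NormedP (SExp.up e) ∧
      SExp.MStep (SExp.up e) (some a, l) E₀ ∧
      E' = C.fill (SExp.st E₀ e) ∧
      n = e.height + 1 := by
  exact loop_entry_aux h hn hE
end

section
/- Neither body transitions nor loop-entry transitions in L̂1(StExp^(*)(A)) increase star height: if E →bo E' or E →[n] E' (for any n ≥ 1) holds in L̂1(StExp^(*)(A)), then h(E') ≤ h(E). -/
universe u v w

lemma mstep_height {A : Type u} {E E' : SExp A} {l : Option A × ℕ}
    (h : SExp.MStep E l E') : SExp.heightS E' ≤ SExp.heightS E := by
  induction h with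
  | act => simp [SExp.heightS, StExp.height]
  | addL _ ih => exact le_trans ih (by simp [SExp.heightS, StExp.height])
  | addR _ ih => exact le_trans ih (by simp [SExp.heightS, StExp.height])
  | upMulL _ ih =>
      simp only [SExp.heightS, StExp.height] at *
      exact max_le_max ih le_rfl
  | upMulR _ _ ih => exact le_trans ih (by simp [SExp.heightS, StExp.height])
  | upStarP _ _ ih =>
      simp only [SExp.heightS, StExp.height] at *
      omega
  | upStarN _ _ ih =>
      simp only [SExp.heightS, StExp.height] at *
      omega
  | prL _ ih => simp only [SExp.heightS] at *; exact max_le_max ih le_rfl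
  | prR _ _ ih => exact le_trans ih (by simp [SExp.heightS])
  | stL _ ih => simp only [SExp.heightS] at *; exact max_le_max ih le_rfl
  | stOne _ => simp [SExp.heightS, StExp.height]

/-- Neither body transitions nor loop-entry transitions increase
star height. -/
theorem marked_steps_do_not_increase_star_height {A : Type u}
    (E E' : SExp A) (a : Option A) :
    (SExp.MStep E (a, 0) E' → SExp.heightS E' ≤ SExp.heightS E) ∧
    (∀ n : ℕ, 1 ≤ n → SExp.MStep E (a, n) E' → SExp.heightS E' ≤ SExp.heightS E) := by
  exact ⟨fun h => mstep_height h, fun _ _ h => mstep_height h⟩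
end
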